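/- For the 4×4 real symmetric matrix M with rows (2,0,0,1),(0,1,1,0),(0,1,1,0),(1,0,0,2), and any unit vectors x,y ∈ ℂ², one has ⟨x⊗y|M|x⊗y⟩ ≤ 5/2, with equality attained at |x₁|=|x₂|=|y₁|=|y₂|=1/√2 with Re(x₁x̄₂)Re(y₁ȳ₂)=1/4. -/

import Mathlib

open Matrix

/-- Kronecker product vector of `x, y ∈ ℂ²` in the ordered basis
`(e₁⊗f₁, e₁⊗f₂, e₂⊗f₁, e₂⊗f₂)`. -/
def kvec (x y : Fin 2 → ℂ) : Fin 4 → ℂ := ![x 0 * y 0, x 0 * y 1, x 1 * y 0, x 1 * y 1]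

/-- For `M = [[2,0,0,1],[0,1,1,0],[0,1,1,0],[1,0,0,2]]` and unit `x, y ∈ ℂ²` one has
`⟨x⊗y|M|x⊗y⟩ ≤ 5/2`, with equality when `|x₁|=|x₂|=|y₁|=|y₂|=1/√2` and
`Re(x₁ x̄₂) Re(y₁ ȳ₂) = 1/4`. -/
theorem expectation_le_five_halves :
    let M : Matrix (Fin 4) (Fin 4) ℂ := !![2,0,0,1; 0,1,1,0; 0,1,1,0; 1,0,0,2]
    (∀ x y : Fin 2 → ℂ, star x ⬝ᵥ x = 1 → star y ⬝ᵥ y = 1 →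
      (star (kvec x y) ⬝ᵥ M.mulVec (kvec x y)).re ≤ 5 / 2) ∧
    (∀ x y : Fin 2 → ℂ, star x ⬝ᵥ x = 1 → star y ⬝ᵥ y = 1 →
      (∀ i, ‖x i‖ = 1 / Real.sqrt 2) →
      (∀ i, ‖y i‖ = 1 / Real.sqrt 2) →
      (x 0 * starRingEnd ℂ (x 1)).re * (y 0 * starRingEnd ℂ (y 1)).re = 1 / 4 →
      (star (kvec x y) ⬝ᵥ M.mulVec (kvec x y)).re = 5 / 2) := by
  intro M
  constructor
  · intro x y hx hy
    have hx' := congrArg Complex.re hx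
    have hy' := congrArg Complex.re hy
    simp only [dotProduct, Fin.sum_univ_two, Pi.star_apply, RCLike.star_def,
      Complex.add_re, Complex.mul_re, Complex.conj_re, Complex.conj_im,
      Complex.one_re] at hx' hy'
    set a := (x 0).re; set b := (x 0).im; set c := (x 1).re; set d := (x 1).im
    set p := (y 0).re; set q := (y 0).im; set r := (y 1).re; set s := (y 1).im
    simp only [M, kvec, Matrix.mulVec, dotProduct, Fin.sum_univ_four,
      Matrix.cons_val', Matrix.cons_val_zero, Matrix.cons_val_one, Matrix.head_cons,
      Matrix.empty_val', Matrix.cons_val_fin_one, Matrix.head_fin_const,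
      Pi.star_apply, RCLike.star_def, Matrix.cons_val_two, Matrix.cons_val_three,
      Matrix.tail_cons, Matrix.of_apply,
      Complex.add_re, Complex.mul_re, Complex.mul_im, Complex.add_im,
      Complex.conj_re, Complex.conj_im, Complex.re_ofNat, Complex.im_ofNat,
      Complex.one_re, Complex.one_im, Complex.zero_re, Complex.zero_im]
    nlinarith [sq_nonneg (a*d - b*c), sq_nonneg (p*s - q*r),
      sq_nonneg ((a*c + b*d) - (p*r + q*s)), sq_nonneg (a^2 + b^2 - p^2 - q^2),
      sq_nonneg (a^2 + b^2 - 1/2), sq_nonneg (p^2 + q^2 - 1/2), hx', hy']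
  · intro x y hx hy hax hay hPQ
    have key : ∀ z : ℂ, ‖z‖ = 1 / Real.sqrt 2 → z.re^2 + z.im^2 = 1/2 := by
      intro z hz
      have h := Complex.sq_norm z
      rw [hz, Complex.normSq_apply] at h
      rw [div_pow, one_pow, Real.sq_sqrt (by norm_num : (2:ℝ) ≥ 0)] at h
      nlinarith [h]
    have h0 := key _ (hax 0); have h1 := key _ (hax 1)
    have h2 := key _ (hay 0); have h3 := key _ (hay 1)
    simp only [Complex.mul_re, Complex.conj_re, Complex.conj_im] at hPQ
    set a := (x 0).re; set b := (x 0).im; set c := (x 1).re; set d := (x 1).im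
    set p := (y 0).re; set q := (y 0).im; set r := (y 1).re; set s := (y 1).im
    simp only [M, kvec, Matrix.mulVec, dotProduct, Fin.sum_univ_four,
      Matrix.cons_val', Matrix.cons_val_zero, Matrix.cons_val_one, Matrix.head_cons,
      Matrix.empty_val', Matrix.cons_val_fin_one, Matrix.head_fin_const,
      Pi.star_apply, RCLike.star_def, Matrix.cons_val_two, Matrix.cons_val_three,
      Matrix.tail_cons, Matrix.of_apply,
      Complex.add_re, Complex.mul_re, Complex.mul_im, Complex.add_im,
      Complex.conj_re, Complex.conj_im, Complex.re_ofNat, Complex.im_ofNat,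
      Complex.one_re, Complex.one_im, Complex.zero_re, Complex.zero_im]
    linear_combination (2*(p^2+q^2) + (r^2+s^2)) * h0 + (2*(r^2+s^2) + (p^2+q^2)) * h1 +
      (3/2)*h2 + (3/2)*h3 + 4*hPQ
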